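/- Fix an index i. The real-valued map t ↦ m(v^{(i,t)})^H Φ(v^{(i,t)})^{-1} m(v^{(i,t)}) satisfies m(v)^H Φ(v)^{-1} m(v) = σ^{-4} y^H A Φ(v) A^H y for all v, and is differentiable at t = v_i with derivative σ^{-4} y^H A Φ(v) E_i(v) Φ(v) A^H y = σ^{-4} v_i^{-2} |y^H A u_i|², where u_i is the i-th column of Φ(v). -/

import Mathlib

open Matrix MeasureTheory

/-- `Dmat v` is the diagonal matrix with diagonal entries `v 1, …, v N`. -/
noncomputable def Dmat {N : ℕ} (v : Fin N → ℝ) : Matrix (Fin N) (Fin N) ℂ :=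
  Matrix.diagonal fun i => (v i : ℂ)

/-- `Phi A σ v = (σ⁻² AᴴA + D(v)⁻¹)⁻¹`. -/
noncomputable def Phi {M N : ℕ} (A : Matrix (Fin M) (Fin N) ℂ) (σ : ℝ) (v : Fin N → ℝ) :
    Matrix (Fin N) (Fin N) ℂ :=
  (((σ : ℂ) ^ 2)⁻¹ • (Aᴴ * A) + (Dmat v)⁻¹)⁻¹

/-- `mvec A σ y v = σ⁻² Φ(v) Aᴴ y`. -/
noncomputable def mvec {M N : ℕ} (A : Matrix (Fin M) (Fin N) ℂ) (σ : ℝ) (y : Fin M → ℂ)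
    (v : Fin N → ℝ) : Fin N → ℂ :=
  ((σ : ℂ) ^ 2)⁻¹ • (Phi A σ v *ᵥ (Aᴴ *ᵥ y))

/-- Circularly symmetric complex Gaussian density
`CN(x; μ, S) = (π^N det S)⁻¹ exp(-(x-μ)ᴴ S⁻¹ (x-μ))` (real-valued, `det S` and the
quadratic form being real for Hermitian positive definite `S`). -/
noncomputable def gaussDensity {N : ℕ} (μ : Fin N → ℂ) (S : Matrix (Fin N) (Fin N) ℂ)
    (x : Fin N → ℂ) : ℝ :=
  (Real.pi ^ N * S.det.re)⁻¹ * Real.exp (-(star (x - μ) ⬝ᵥ (S⁻¹ *ᵥ (x - μ))).re)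

/-- Likelihood `p(y|x) = (π σ²)^{-M} exp(-σ⁻² ‖y - A x‖²)`. -/
noncomputable def likelihood {M N : ℕ} (A : Matrix (Fin M) (Fin N) ℂ) (σ : ℝ) (y : Fin M → ℂ)
    (x : Fin N → ℂ) : ℝ :=
  ((Real.pi * σ ^ 2) ^ M)⁻¹ * Real.exp (-(σ ^ 2)⁻¹ * ∑ j, Complex.normSq ((y - A *ᵥ x) j))

section Aux

open ComplexOrder

attribute [local instance] Matrix.linftyOpNormedRing Matrix.linftyOpNormedAlgebra
  Matrix.linftyOpNormedAddCommGroup Matrix.linftyOpNormedSpace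

variable {M N : ℕ} (A : Matrix (Fin M) (Fin N) ℂ) (σ : ℝ) (y : Fin M → ℂ)

/-- The matrix `σ⁻² AᴴA + D(v)⁻¹`, whose inverse is `Phi`. -/
noncomputable def Smat (v : Fin N → ℝ) : Matrix (Fin N) (Fin N) ℂ :=
  ((σ : ℂ) ^ 2)⁻¹ • (Aᴴ * A) + (Dmat v)⁻¹

lemma Dmat_inv (v : Fin N → ℝ) (hv : ∀ j, v j ≠ 0) :
    (Dmat v)⁻¹ = Matrix.diagonal (fun j => ((v j : ℂ))⁻¹) :=
  Matrix.inv_eq_right_inv (by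
    rw [Dmat, Matrix.diagonal_mul_diagonal]
    have : (fun j => (v j : ℂ) * ((v j : ℂ))⁻¹) = fun _ => 1 :=
      funext fun j => mul_inv_cancel₀ (Complex.ofReal_ne_zero.2 (hv j))
    rw [this, Matrix.diagonal_one])

lemma Smat_posDef (hσ : 0 < σ) (v : Fin N → ℝ) (hv : ∀ j, 0 < v j) :
    (Smat A σ v).PosDef := by
  have h1 : ((σ : ℂ) ^ 2)⁻¹ • (Aᴴ * A)
      = ((((σ : ℝ)⁻¹ : ℝ) : ℂ) • A)ᴴ * ((((σ : ℝ)⁻¹ : ℝ) : ℂ) • A) := by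
    rw [Matrix.conjTranspose_smul, Matrix.smul_mul, Matrix.mul_smul, smul_smul]
    congr 1
    rw [Complex.star_def, Complex.conj_ofReal, ← Complex.ofReal_mul, ← Complex.ofReal_pow,
      ← Complex.ofReal_inv]
    norm_num [pow_two, mul_inv]
  have h2 : ((Smat A σ v) : Matrix (Fin N) (Fin N) ℂ).PosDef := by
    rw [Smat, Dmat_inv v (fun j => (hv j).ne'), h1]
    refine Matrix.PosDef.posSemidef_add (Matrix.posSemidef_conjTranspose_mul_self _) ?_
    refine Matrix.PosDef.diagonal fun j => ?_
    rw [← Complex.ofReal_inv]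
    exact_mod_cast inv_pos.2 (hv j)
  exact h2

lemma Phi_eq_inv (v : Fin N → ℝ) : Phi A σ v = (Smat A σ v)⁻¹ := rfl

lemma part1 (hσ : 0 < σ) (v : Fin N → ℝ) (hv : ∀ j, 0 < v j) :
    star (mvec A σ y v) ⬝ᵥ ((Phi A σ v)⁻¹ *ᵥ mvec A σ y v)
      = ((σ : ℂ) ^ 4)⁻¹ * (star y ⬝ᵥ (A *ᵥ (Phi A σ v *ᵥ (Aᴴ *ᵥ y)))) := by
  have hpd := Smat_posDef A σ hσ v hv
  have hdet : IsUnit (Smat A σ v).det := (Matrix.isUnit_iff_isUnit_det _).1 hpd.isUnit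
  set u := Aᴴ *ᵥ y with hu
  set P := Phi A σ v with hPdef
  have hPdet : IsUnit P.det := Matrix.isUnit_nonsing_inv_det _ hdet
  have hPH : Pᴴ = P := hpd.isHermitian.inv
  have hstarc : star (((σ : ℂ) ^ 2)⁻¹) = ((σ : ℂ) ^ 2)⁻¹ := by
    rw [Complex.star_def, ← Complex.ofReal_pow, ← Complex.ofReal_inv, Complex.conj_ofReal]
  have key : P⁻¹ *ᵥ (P *ᵥ u) = u := by
    rw [Matrix.mulVec_mulVec, Matrix.nonsing_inv_mul _ hPdet, Matrix.one_mulVec]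
  have hyA : star y ᵥ* A = star u := by
    rw [hu, Matrix.star_mulVec, Matrix.conjTranspose_conjTranspose]
  rw [mvec, ← hPdef, ← hu, star_smul, Matrix.mulVec_smul, smul_dotProduct,
    dotProduct_smul, hstarc, key, smul_smul, Matrix.star_mulVec, hPH,
    ← Matrix.dotProduct_mulVec, Matrix.dotProduct_mulVec (star y), hyA, smul_eq_mul]
  congr 1
  rw [← mul_inv, ← pow_add]


/-- The real-linear functional `Q ↦ (σ⁻⁴ yᴴ A Q u).re`. -/
noncomputable def Lmap (u : Fin N → ℂ) : Matrix (Fin N) (Fin N) ℂ →ₗ[ℝ] ℝ where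
  toFun Q := (((σ : ℂ) ^ 4)⁻¹ * (star y ⬝ᵥ (A *ᵥ (Q *ᵥ u)))).re
  map_add' Q R := by
    simp [Matrix.add_mulVec, Matrix.mulVec_add, dotProduct_add, mul_add]
  map_smul' r Q := by
    simp only [Matrix.smul_mulVec, Matrix.mulVec_smul, dotProduct_smul,
      Complex.real_smul, RingHom.id_apply, smul_eq_mul, mul_left_comm, Complex.re_ofReal_mul]

lemma part2 (hσ : 0 < σ) (v : Fin N → ℝ) (hv : ∀ j, 0 < v j) (i : Fin N) :
    HasDerivAt
      (fun t : ℝ =>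
        (star (mvec A σ y (Function.update v i t)) ⬝ᵥ
          ((Phi A σ (Function.update v i t))⁻¹ *ᵥ mvec A σ y (Function.update v i t))).re)
      ((((σ : ℂ) ^ 4)⁻¹ * (star y ⬝ᵥ (A *ᵥ
          ((Phi A σ v * Matrix.single i i (((v i : ℂ)) ^ 2)⁻¹ * Phi A σ v) *ᵥ
            (Aᴴ *ᵥ y))))).re) (v i) := by
  classical
  set u := Aᴴ *ᵥ y with hu
  set P := Phi A σ v with hPdef
  set C : Matrix (Fin N) (Fin N) ℂ :=
    ((σ : ℂ) ^ 2)⁻¹ • (Aᴴ * A) + Matrix.diagonal (fun j => if j = i then 0 else ((v j : ℂ))⁻¹)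
    with hC
  set E : Matrix (Fin N) (Fin N) ℂ := Matrix.single i i 1 with hE
  have hSeq : ∀ t : ℝ, t ≠ 0 → Smat A σ (Function.update v i t) = C + ((t : ℂ))⁻¹ • E := by
    intro t ht
    have hnz : ∀ j, Function.update v i t j ≠ 0 := fun j => by
      rcases eq_or_ne j i with h | h
      · rw [h, Function.update_self]; exact ht
      · rw [Function.update_of_ne h]; exact (hv j).ne'
    rw [Smat, Dmat_inv _ hnz, hC, add_assoc]
    congr 1
    ext j k
    rcases eq_or_ne j k with rfl | hjk
    · rcases eq_or_ne j i with rfl | hji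
      · simp [hE, Function.update_self, Matrix.single]
      · simp [hE, Function.update_of_ne hji, hji, Ne.symm hji, Matrix.single]
    · have hcond : ¬(i = j ∧ i = k) := fun h => hjk (h.1.symm.trans h.2)
      simp [hE, Matrix.diagonal_apply_ne _ hjk, hjk, hcond, Matrix.single]
  have hSv : Smat A σ v = C + (((v i : ℝ) : ℂ))⁻¹ • E := by
    have h := hSeq (v i) (hv i).ne'
    rwa [Function.update_eq_self] at h
  have hpd := Smat_posDef A σ hσ v hv
  have hUnit : IsUnit (Smat A σ v) := hpd.isUnit
  set S₀ : (Matrix (Fin N) (Fin N) ℂ)ˣ := hUnit.unit with hS₀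
  have hS0coe : (S₀ : Matrix (Fin N) (Fin N) ℂ) = C + (((v i : ℝ) : ℂ))⁻¹ • E := by
    rw [hS₀, IsUnit.unit_spec, hSv]
  have hS0inv : ((S₀⁻¹ : (Matrix (Fin N) (Fin N) ℂ)ˣ) : Matrix (Fin N) (Fin N) ℂ) = P := by
    rw [Matrix.coe_units_inv, hS₀, IsUnit.unit_spec, hPdef, Phi_eq_inv]
  have hinner : HasDerivAt (fun t : ℝ => C + ((t : ℂ))⁻¹ • E)
      ((-((((v i : ℝ) : ℂ)) ^ 2)⁻¹) • E) (v i) := by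
    have h2 : HasDerivAt (fun t : ℝ => ((t : ℂ))⁻¹) (-((((v i : ℝ) : ℂ)) ^ 2)⁻¹) (v i) :=
      (hasDerivAt_inv (by exact_mod_cast (hv i).ne')).comp_ofReal
    exact (h2.smul_const E).const_add C
  have hfd := hasFDerivAt_ringInverse (𝕜 := ℝ) S₀
  rw [hS0coe] at hfd
  have hd2 : HasDerivAt (fun t : ℝ => Ring.inverse (C + ((t : ℂ))⁻¹ • E))
      (P * Matrix.single i i (((v i : ℂ)) ^ 2)⁻¹ * P) (v i) := by
    have h := hfd.comp_hasDerivAt (v i) hinner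
    convert h using 1
    case e'_4 => rfl
    case e'_5 => rfl
    case e'_6 => rfl
    case e'_8 => rfl
    rw [ContinuousLinearMap.neg_apply, ContinuousLinearMap.mulLeftRight_apply, hS0inv]
    rw [show Matrix.single i i ((((v i : ℝ) : ℂ)) ^ 2)⁻¹ = ((((v i : ℝ) : ℂ)) ^ 2)⁻¹ • E
      from by rw [hE, Matrix.smul_single, smul_eq_mul, mul_one]]
    simp [Matrix.mul_smul, Matrix.smul_mul]
  have hL := ((Lmap A σ y u).toContinuousLinearMap.hasFDerivAt
    (x := Ring.inverse (C + (((v i : ℝ) : ℂ))⁻¹ • E))).comp_hasDerivAt (v i) hd2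
  have hLval : (Lmap A σ y u).toContinuousLinearMap
      (P * Matrix.single i i (((v i : ℂ)) ^ 2)⁻¹ * P)
      = ((((σ : ℂ) ^ 4)⁻¹ * (star y ⬝ᵥ (A *ᵥ
          ((P * Matrix.single i i (((v i : ℂ)) ^ 2)⁻¹ * P) *ᵥ u)))).re) := rfl
  replace hL := hL.congr_deriv hLval
  refine HasDerivAt.congr_of_eventuallyEq hL ?_
  refine Filter.eventuallyEq_of_mem (Ioi_mem_nhds (hv i)) fun t ht => ?_
  have hpos : ∀ j, 0 < Function.update v i t j := fun j => by
    rcases eq_or_ne j i with h | h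
    · rw [h, Function.update_self]; exact ht
    · rw [Function.update_of_ne h]; exact hv j
  have h1 := part1 A σ y hσ (Function.update v i t) hpos
  have h2 : Phi A σ (Function.update v i t) = Ring.inverse (C + ((t : ℂ))⁻¹ • E) := by
    rw [Phi_eq_inv, hSeq t (ne_of_gt ht), Matrix.nonsing_inv_eq_ringInverse]
  calc (star (mvec A σ y (Function.update v i t)) ⬝ᵥ
        ((Phi A σ (Function.update v i t))⁻¹ *ᵥ mvec A σ y (Function.update v i t))).re
      = (((σ : ℂ) ^ 4)⁻¹ *
          (star y ⬝ᵥ (A *ᵥ (Ring.inverse (C + ((t : ℂ))⁻¹ • E) *ᵥ (Aᴴ *ᵥ y))))).re := by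
        rw [h1, h2]
    _ = _ := rfl

lemma part3 (hσ : 0 < σ) (v : Fin N → ℝ) (hv : ∀ j, 0 < v j) (i : Fin N) :
    (((σ : ℂ) ^ 4)⁻¹ * (star y ⬝ᵥ (A *ᵥ
        ((Phi A σ v * Matrix.single i i (((v i : ℂ)) ^ 2)⁻¹ * Phi A σ v) *ᵥ
          (Aᴴ *ᵥ y))))).re
      = (σ ^ 4)⁻¹ * ((v i) ^ 2)⁻¹ *
          Complex.normSq (star y ⬝ᵥ (A *ᵥ fun j => Phi A σ v j i)) := by
  classical
  set u := Aᴴ *ᵥ y with hu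
  set P := Phi A σ v with hPdef
  set c : ℂ := (((v i : ℝ) : ℂ) ^ 2)⁻¹ with hc
  have hpd := Smat_posDef A σ hσ v hv
  have hPH : Pᴴ = P := hpd.isHermitian.inv
  have hyA : star y ᵥ* A = star u := by
    rw [hu, Matrix.star_mulVec, Matrix.conjTranspose_conjTranspose]
  set z := P *ᵥ u with hz
  have hstar : star z = star u ᵥ* P := by
    rw [hz, Matrix.star_mulVec, hPH]
  have hPc : ∀ j k, (starRingEnd ℂ) (P j k) = P k j := fun j k => by
    have h := congrFun (congrFun hPH k) j
    simpa [Matrix.conjTranspose_apply] using h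
  have h1 : star y ⬝ᵥ (A *ᵥ ((P * Matrix.single i i c * P) *ᵥ u))
      = star z ⬝ᵥ (Matrix.single i i c *ᵥ z) := by
    rw [Matrix.dotProduct_mulVec, hyA, ← Matrix.mulVec_mulVec, ← Matrix.mulVec_mulVec,
      Matrix.dotProduct_mulVec (star u), ← hstar, ← hz]
  have h2 : Matrix.single i i c *ᵥ z = Function.update (0 : Fin N → ℂ) i (c * z i) :=
    Matrix.single_mulVec i i c z
  have h3 : star z ⬝ᵥ Function.update (0 : Fin N → ℂ) i (c * z i) = star (z i) * (c * z i) := by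
    simp [dotProduct, Function.update_apply]
  have h4 : star y ⬝ᵥ (A *ᵥ fun j => P j i) = (starRingEnd ℂ) (z i) := by
    rw [Matrix.dotProduct_mulVec, hyA, hz]
    simp only [Matrix.mulVec, dotProduct, _root_.map_sum, _root_.map_mul]
    refine Finset.sum_congr rfl fun j _ => ?_
    rw [hPc i j, Pi.star_apply, Complex.star_def]
    ring
  rw [h1, h2, h3, h4, Complex.normSq_conj]
  have h5 : ((σ : ℂ) ^ 4)⁻¹ * (star (z i) * (c * z i))
      = ((((σ : ℝ) ^ 4)⁻¹ * (((v i) ^ 2)⁻¹) * Complex.normSq (z i) : ℝ) : ℂ) := by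
    rw [show star (z i) * (c * z i) = c * ((starRingEnd ℂ) (z i) * z i) from by
        rw [Complex.star_def]; ring,
      ← Complex.normSq_eq_conj_mul_self, hc]
    push_cast
    ring
  rw [h5, Complex.ofReal_re]

end Aux

/-- the real-valued map t ↦ m(v^{(i,t)})ᴴ Φ(v^{(i,t)})⁻¹ m(v^{(i,t)})
satisfies m(v)ᴴΦ(v)⁻¹m(v) = σ⁻⁴ yᴴ A Φ(v) Aᴴ y for all v (with positive entries), and is
differentiable at t = vᵢ with derivative σ⁻⁴ yᴴ A Φ(v) E_i(v) Φ(v) Aᴴ y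
  = σ⁻⁴ vᵢ⁻² |yᴴ A uᵢ|², where uᵢ is the i-th column of Φ(v). -/
theorem stmt13 (M N : ℕ) (hM : 0 < M) (hN : 0 < N) (A : Matrix (Fin M) (Fin N) ℂ)
    (y : Fin M → ℂ) (σ : ℝ) (hσ : 0 < σ) (v : Fin N → ℝ) (hv : ∀ i, 0 < v i) (i : Fin N) :
    (∀ v' : Fin N → ℝ, (∀ j, 0 < v' j) →
        star (mvec A σ y v') ⬝ᵥ ((Phi A σ v')⁻¹ *ᵥ mvec A σ y v')
          = ((σ : ℂ) ^ 4)⁻¹ * (star y ⬝ᵥ (A *ᵥ (Phi A σ v' *ᵥ (Aᴴ *ᵥ y))))) ∧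
      HasDerivAt
        (fun t : ℝ =>
          (star (mvec A σ y (Function.update v i t)) ⬝ᵥ
            ((Phi A σ (Function.update v i t))⁻¹ *ᵥ mvec A σ y (Function.update v i t))).re)
        ((((σ : ℂ) ^ 4)⁻¹ * (star y ⬝ᵥ (A *ᵥ
            ((Phi A σ v * Matrix.single i i (((v i : ℂ)) ^ 2)⁻¹ * Phi A σ v) *ᵥ
              (Aᴴ *ᵥ y))))).re) (v i) ∧
      (((σ : ℂ) ^ 4)⁻¹ * (star y ⬝ᵥ (A *ᵥ
          ((Phi A σ v * Matrix.single i i (((v i : ℂ)) ^ 2)⁻¹ * Phi A σ v) *ᵥ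
            (Aᴴ *ᵥ y))))).re
        = (σ ^ 4)⁻¹ * ((v i) ^ 2)⁻¹ *
            Complex.normSq (star y ⬝ᵥ (A *ᵥ fun j => Phi A σ v j i)) := by
  exact ⟨fun v' hv' => part1 A σ y hσ v' hv', part2 A σ y hσ v hv i, part3 A σ y hσ v hv i⟩
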